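/- Let λ_1,…,λ_k, σ_1,…,σ_k ∈ ℂ be 2k pairwise distinct points and w, h ∈ ℂ^k. Set Λ = diag(λ_1,…,λ_k), Σ = diag(σ_1,…,σ_k), M = I_k, D = −Λ − Σ, K = ΛΣ + w·𝟙^T, b = w and c = h. Then for every s ∈ ℂ with s ∉ {λ_1,…,λ_k} ∪ {σ_1,…,σ_k} and d_SO(s) := 1 + Σ_{j=1}^k w_j/((s−λ_j)(s−σ_j)) ≠ 0, the matrix s²M + sD + K ∈ ℂ^{k×k} is invertible and c^T (s²M + sD + K)^{-1} b = (Σ_{j=1}^k h_j w_j/((s−λ_j)(s−σ_j))) / d_SO(s). -/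

import Mathlib

open BigOperators

/-- Second-order state-space realization of the second-order
barycentric form: with `M = I`, `D = −Λ − Σ`, `K = ΛΣ + w𝟙ᵀ`, `b = w`, `c = h`,
for each `s` outside the (quasi-)support points with nonvanishing barycentric
denominator `d_SO(s)`, the matrix `s²M + sD + K` is invertible and
`cᵀ(s²M + sD + K)⁻¹ b = (Σ_j h_j w_j/((s−λ_j)(s−σ_j))) / d_SO(s)`. -/
theorem stmt_12 (k : ℕ) (lam sig : Fin k → ℂ)
    (hlam : Function.Injective lam) (hsig : Function.Injective sig)
    (hls : ∀ i j, lam i ≠ sig j)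
    (w h : Fin k → ℂ)
    (D K : Matrix (Fin k) (Fin k) ℂ)
    (hD : D = - Matrix.diagonal lam - Matrix.diagonal sig)
    (hK : K = Matrix.diagonal lam * Matrix.diagonal sig + Matrix.of (fun i _ => w i))
    (s : ℂ) (hsl : ∀ j, s ≠ lam j) (hss : ∀ j, s ≠ sig j)
    (hd : 1 + ∑ j, w j / ((s - lam j) * (s - sig j)) ≠ 0) :
    IsUnit (s ^ 2 • (1 : Matrix (Fin k) (Fin k) ℂ) + s • D + K)
    ∧ dotProduct h ((s ^ 2 • (1 : Matrix (Fin k) (Fin k) ℂ) + s • D + K)⁻¹.mulVec w)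
        = (∑ j, h j * w j / ((s - lam j) * (s - sig j)))
            / (1 + ∑ j, w j / ((s - lam j) * (s - sig j))) := by
  set dd : Fin k → ℂ := fun j => (s - lam j) * (s - sig j) with hdd
  have hd0 : ∀ j, dd j ≠ 0 := fun j =>
    mul_ne_zero (sub_ne_zero.2 (hsl j)) (sub_ne_zero.2 (hss j))
  set S : ℂ := ∑ j, w j / dd j with hS
  have hdne : (1 + S) ≠ 0 := hd
  set A := s ^ 2 • (1 : Matrix (Fin k) (Fin k) ℂ) + s • D + K with hA
  have hAe : ∀ i j, A i j = (if i = j then dd i else 0) + w i := by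
    intro i j
    by_cases hij : i = j
    · subst hij
      simp [hA, hD, hK, Matrix.add_apply, Matrix.smul_apply, Matrix.one_apply,
        Matrix.diagonal_apply, Matrix.sub_apply, Matrix.neg_apply, hdd]
      ring
    · simp [hA, hD, hK, Matrix.add_apply, Matrix.smul_apply, Matrix.one_apply,
        Matrix.diagonal_apply, Matrix.sub_apply, Matrix.neg_apply, hij]
  set B : Matrix (Fin k) (Fin k) ℂ :=
    Matrix.of (fun i j =>
      (if i = j then (dd j)⁻¹ else 0) - w i * (dd i)⁻¹ * ((dd j)⁻¹ * (1 + S)⁻¹)) with hB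
  have hSalt : ∑ m, w m * (dd m)⁻¹ = S := by
    rw [hS]; exact Finset.sum_congr rfl fun m _ => (div_eq_mul_inv _ _).symm
  clear_value dd S A
  have hAB : A * B = 1 := by
    ext i j
    rw [Matrix.mul_apply]
    simp_rw [hAe, hB, Matrix.of_apply, add_mul, Finset.sum_add_distrib, ite_mul, zero_mul,
      Finset.sum_ite_eq, Finset.mem_univ, if_true, ← Finset.mul_sum,
      Finset.sum_sub_distrib]
    rw [Finset.sum_ite_eq' Finset.univ j (fun m => (dd j)⁻¹)]
    simp only [Finset.mem_univ, if_true]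
    have : ∑ m, w m * (dd m)⁻¹ * ((dd j)⁻¹ * (1 + S)⁻¹) = S * ((dd j)⁻¹ * (1 + S)⁻¹) := by
      rw [← Finset.sum_mul, hSalt]
    rw [this, Matrix.one_apply]
    by_cases hij : i = j
    · subst hij
      simp only [if_true]
      field_simp [hd0 i, hdne]
      ring
    · simp only [hij, if_false]
      field_simp [hd0 i, hd0 j, hdne]
      ring
  have hBA : B * A = 1 := by
    ext i j
    rw [Matrix.mul_apply]
    simp_rw [hB, Matrix.of_apply, hAe, sub_mul, mul_add, Finset.sum_sub_distrib,
      Finset.sum_add_distrib, ite_mul, zero_mul, Finset.sum_ite_eq, Finset.mem_univ, if_true]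
    have h1 : ∑ m, w i * (dd i)⁻¹ * ((dd m)⁻¹ * (1 + S)⁻¹) * (if m = j then dd m else 0)
        = w i * (dd i)⁻¹ * ((dd j)⁻¹ * (1 + S)⁻¹) * dd j := by
      rw [Finset.sum_congr rfl (fun m _ => by rw [mul_ite, mul_zero]),
        Finset.sum_ite_eq' Finset.univ j
          (fun m => w i * (dd i)⁻¹ * ((dd m)⁻¹ * (1 + S)⁻¹) * dd m)]
      simp
    have h2 : ∑ m, w i * (dd i)⁻¹ * ((dd m)⁻¹ * (1 + S)⁻¹) * w m
        = w i * (dd i)⁻¹ * (1 + S)⁻¹ * S := by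
      rw [← hSalt, Finset.mul_sum]
      exact Finset.sum_congr rfl fun m _ => by ring
    rw [h1, h2, Matrix.one_apply]
    by_cases hij : i = j
    · subst hij
      simp only [if_true]
      have hX : dd i ^ 4 + dd i ^ 4 * S * 2 + dd i ^ 4 * S ^ 2 ≠ 0 := by
        have hXe : dd i ^ 4 + dd i ^ 4 * S * 2 + dd i ^ 4 * S ^ 2 = dd i ^ 4 * (1 + S) ^ 2 := by
          ring
        rw [hXe]
        exact mul_ne_zero (pow_ne_zero _ (hd0 i)) (pow_ne_zero _ hdne)
      field_simp [hd0 i, hdne]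
      ring
    · simp only [hij, if_false]
      field_simp [hd0 i, hd0 j, hdne]
      ring
  have hU : IsUnit A := (Matrix.isUnit_iff_isUnit_det A).2 (Matrix.isUnit_det_of_right_inverse hAB)
  refine ⟨hU, ?_⟩
  have hinv : A⁻¹ = B := Matrix.inv_eq_right_inv hAB
  rw [hinv]
  have hmv : ∀ i, B.mulVec w i = w i * (dd i)⁻¹ * (1 + S)⁻¹ := by
    intro i
    rw [Matrix.mulVec, dotProduct]
    simp_rw [hB, Matrix.of_apply, sub_mul, Finset.sum_sub_distrib, ite_mul, zero_mul,
      Finset.sum_ite_eq, Finset.mem_univ, if_true]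
    have h2 : ∑ m, w i * (dd i)⁻¹ * ((dd m)⁻¹ * (1 + S)⁻¹) * w m
        = w i * (dd i)⁻¹ * (1 + S)⁻¹ * S := by
      rw [← hSalt, Finset.mul_sum]
      exact Finset.sum_congr rfl fun m _ => by ring
    rw [h2]
    field_simp [hd0 i, hdne]
    ring
  rw [dotProduct, div_eq_mul_inv, Finset.sum_mul]
  refine Finset.sum_congr rfl fun i _ => ?_
  have hdi : (s - lam i) * (s - sig i) = dd i := by rw [hdd]
  rw [hmv i, div_eq_mul_inv, hdi]
  ring
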